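/- If C is a Type II Z_4-code of length n (self-dual with all Euclidean weights divisible by 8), then: (a) the torsion code C^{(2)} = {c ∈ F_2^n : 2c ∈ C} is an even binary code, (b) the residue code C^{(1)} contains the all-ones vector, and (c) n ≡ 0 (mod 8). -/

import Mathlib

open Finset

def nCount {n : ℕ} (x : Fin n → ZMod 4) (a : ZMod 4) : ℕ :=
  (Finset.univ.filter (fun i => x i = a)).card

def wtE {n : ℕ} (x : Fin n → ZMod 4) : ℕ :=
  nCount x 1 + 4 * nCount x 2 + nCount x 3

def z4inner {n : ℕ} (x y : Fin n → ZMod 4) : ZMod 4 :=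
  ∑ i : Fin n, x i * y i

/-- binary Hamming weight -/
def wtB {n : ℕ} (y : Fin n → ZMod 2) : ℕ :=
  (Finset.univ.filter (fun i => y i ≠ 0)).card

/-- lift of a binary vector to `Z_4` with entries in `{0,1}` -/
def liftB {n : ℕ} (y : Fin n → ZMod 2) : Fin n → ZMod 4 :=
  fun i => (((y i).val : ℕ) : ZMod 4)

/-! ### Auxiliary definitions -/

/-- reduction mod 2 of an element of `ZMod 4` -/
def r4 (a : ZMod 4) : ZMod 2 := ((a.val : ℕ) : ZMod 2)

/-- the injection `ZMod 2 → ZMod 4` given by multiplication by 2 -/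
def up2 (a : ZMod 2) : ZMod 4 := 2 * ((a.val : ℕ) : ZMod 4)

lemma r4_add (a b : ZMod 4) : r4 (a + b) = r4 a + r4 b := by revert a b; decide
lemma r4_mul (a b : ZMod 4) : r4 (a * b) = r4 a * r4 b := by revert a b; decide
lemma up2_add (a b : ZMod 2) : up2 (a + b) = up2 a + up2 b := by revert a b; decide
lemma up2_eq_zero_iff (a : ZMod 2) : up2 a = 0 ↔ a = 0 := by revert a; decide
lemma two_liftB_mul (a : ZMod 2) (b : ZMod 4) :
    (2 * ((a.val : ℕ) : ZMod 4)) * b = up2 (a * r4 b) := by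
  revert a b; decide

/-- `up2` as an additive monoid hom. -/
def up2hom : ZMod 2 →+ ZMod 4 where
  toFun := up2
  map_zero' := by decide
  map_add' := up2_add

/-- residue code of a `Z₄`-code, as a binary code -/
def resCode {n : ℕ} (C : Submodule (ZMod 4) (Fin n → ZMod 4)) :
    Submodule (ZMod 2) (Fin n → ZMod 2) where
  carrier := {t | ∃ c ∈ C, ∀ i, r4 (c i) = t i}
  add_mem' := by
    rintro a b ⟨c, hc, hca⟩ ⟨d, hd, hdb⟩
    exact ⟨c + d, C.add_mem hc hd, fun i => by
      simp only [Pi.add_apply, r4_add, hca i, hdb i]⟩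
  zero_mem' := ⟨0, C.zero_mem, fun i => by simp [r4]⟩
  smul_mem' := by
    rintro r t ⟨c, hc, hct⟩
    have hr : ∀ a : ZMod 2, a = 0 ∨ a = 1 := by decide
    rcases hr r with rfl | rfl
    · exact ⟨0, C.zero_mem, fun i => by simp [r4]⟩
    · exact ⟨c, hc, fun i => by simpa using hct i⟩

/-- the standard dot-product bilinear form on `(ZMod 2)ⁿ` -/
def dotF (n : ℕ) : LinearMap.BilinForm (ZMod 2) (Fin n → ZMod 2) :=
  LinearMap.mk₂ (ZMod 2) (fun x y => ∑ i, x i * y i)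
    (fun x x' y => by simp [add_mul, Finset.sum_add_distrib])
    (fun r x y => by simp [Finset.mul_sum, mul_assoc])
    (fun x y y' => by simp [mul_add, Finset.sum_add_distrib])
    (fun r x y => by
      simp [Finset.mul_sum]; apply Finset.sum_congr rfl; intros; ring)

lemma dotF_apply {n : ℕ} (x y : Fin n → ZMod 2) : dotF n x y = ∑ i, x i * y i := rfl

lemma dotF_refl (n : ℕ) : (dotF n).IsRefl := by
  intro x y h
  rw [dotF_apply] at h ⊢
  rw [← h]
  exact Finset.sum_congr rfl fun i _ => mul_comm _ _

lemma dotF_nondeg (n : ℕ) : (dotF n).Nondegenerate := by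
  refine (LinearMap.IsRefl.nondegenerate_iff_separatingLeft (dotF_refl n)).mpr ?_
  intro x hx
  funext j
  have := hx (Pi.single j 1)
  rw [dotF_apply] at this
  rw [Finset.sum_eq_single j (fun i _ hij => by simp [Pi.single_eq_of_ne hij])
    (fun h => absurd (Finset.mem_univ j) h)] at this
  simpa using this

theorem typeII_properties {n : ℕ} (C : Submodule (ZMod 4) (Fin n → ZMod 4))
    (hsd : ∀ x, x ∈ C ↔ ∀ y ∈ C, z4inner x y = 0)
    (hII : ∀ c ∈ C, 8 ∣ wtE c) :
    (∀ t : Fin n → ZMod 2, (2 : ZMod 4) • liftB t ∈ C → Even (wtB t)) ∧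
    (∃ c ∈ C, ∀ i, (((c i).val : ℕ) : ZMod 2) = 1) ∧
    8 ∣ n := by
  -- the Euclidean weight of 2·lift t is 4·(binary weight of t)
  have hwE : ∀ t : Fin n → ZMod 2, wtE ((2 : ZMod 4) • liftB t) = 4 * wtB t := by
    intro t
    have he : ∀ i, ((2 : ZMod 4) • liftB t) i = 2 * (((t i).val : ℕ) : ZMod 4) := fun i => rfl
    have h1 : ∀ a : ZMod 2, ¬ (2 * ((a.val : ℕ) : ZMod 4) = 1) := by decide
    have h3 : ∀ a : ZMod 2, ¬ (2 * ((a.val : ℕ) : ZMod 4) = 3) := by decide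
    have h2 : ∀ a : ZMod 2, (2 * ((a.val : ℕ) : ZMod 4) = 2) ↔ a ≠ 0 := by decide
    unfold wtE nCount wtB
    have e1 : (Finset.univ.filter (fun i => ((2 : ZMod 4) • liftB t) i = 1)) = ∅ := by
      apply Finset.filter_false_of_mem; intro i _; rw [he i]; exact h1 _
    have e3 : (Finset.univ.filter (fun i => ((2 : ZMod 4) • liftB t) i = 3)) = ∅ := by
      apply Finset.filter_false_of_mem; intro i _; rw [he i]; exact h3 _
    have e2 : (Finset.univ.filter (fun i => ((2 : ZMod 4) • liftB t) i = 2)) =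
        (Finset.univ.filter (fun i => t i ≠ 0)) := by
      apply Finset.filter_congr; intro i _; rw [he i]; exact_mod_cast (h2 (t i))
    rw [e1, e2, e3]; simp
  -- part (a)
  have partA : ∀ t : Fin n → ZMod 2, (2 : ZMod 4) • liftB t ∈ C → Even (wtB t) := by
    intro t ht
    have := hII _ ht
    rw [hwE t] at this
    rcases this with ⟨k, hk⟩
    exact ⟨k, by omega⟩
  -- membership of 2·lift t in C is orthogonality to the residue code
  have hmem : ∀ t : Fin n → ZMod 2,
      ((2 : ZMod 4) • liftB t ∈ C ↔ t ∈ (dotF n).orthogonal (resCode C)) := by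
    intro t
    rw [hsd]
    constructor
    · rintro h s ⟨c, hc, hcs⟩
      have h0 := h c hc
      unfold z4inner at h0
      have hterm : ∀ i, ((2 : ZMod 4) • liftB t) i * c i = up2 (t i * r4 (c i)) := by
        intro i; exact two_liftB_mul (t i) (c i)
      rw [Finset.sum_congr rfl (fun i _ => hterm i)] at h0
      have hsum : (∑ i, up2 (t i * r4 (c i))) = up2 (∑ i, t i * r4 (c i)) :=
        (map_sum up2hom _ Finset.univ).symm
      rw [hsum] at h0
      have hz : (∑ i, t i * r4 (c i)) = 0 := (up2_eq_zero_iff _).mp h0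
      show dotF n s t = 0
      rw [dotF_apply]
      rw [← hz]
      exact Finset.sum_congr rfl fun i _ => by rw [← hcs i, mul_comm]
    · intro h y hy
      have hs : (fun i => r4 (y i)) ∈ resCode C := ⟨y, hy, fun i => rfl⟩
      have h0 : dotF n (fun i => r4 (y i)) t = 0 := h _ hs
      rw [dotF_apply] at h0
      unfold z4inner
      have hterm : ∀ i, ((2 : ZMod 4) • liftB t) i * y i = up2 (t i * r4 (y i)) := by
        intro i; exact two_liftB_mul (t i) (y i)
      rw [Finset.sum_congr rfl (fun i _ => hterm i)]
      have hsum : (∑ i, up2 (t i * r4 (y i))) = up2 (∑ i, t i * r4 (y i)) :=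
        (map_sum up2hom _ Finset.univ).symm
      rw [hsum, up2_eq_zero_iff, ← h0]
      exact Finset.sum_congr rfl fun i _ => mul_comm _ _
  -- the all-ones vector is in the residue code
  have hone : (fun _ => (1 : ZMod 2)) ∈ resCode C := by
    rw [← (dotF n).orthogonal_orthogonal (dotF_nondeg n) (dotF_refl n) (resCode C)]
    intro t ht
    have h2 : (2 : ZMod 4) • liftB t ∈ C := (hmem t).mpr ht
    have hev := partA t h2
    show dotF n t (fun _ => 1) = 0
    rw [dotF_apply]
    have : (∑ i, t i * 1) = ((wtB t : ℕ) : ZMod 2) := by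
      simp only [mul_one]
      rw [← Finset.sum_filter_ne_zero]
      have : ∀ i ∈ Finset.univ.filter (fun i => t i ≠ 0), t i = 1 := by
        intro i hi
        have h2' : ∀ a : ZMod 2, a = 0 ∨ a = 1 := by decide
        rcases h2' (t i) with h | h
        · exact absurd h (Finset.mem_filter.mp hi).2
        · exact h
      rw [Finset.sum_congr rfl this, Finset.sum_const, nsmul_eq_mul, mul_one]
      rfl
    rw [this, ZMod.natCast_eq_zero_iff]
    exact hev.two_dvd
  rcases hone with ⟨c, hc, hcall⟩
  refine ⟨partA, ⟨c, hc, fun i => hcall i⟩, ?_⟩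
  -- part (c): the Euclidean weight of the all-odd codeword is n
  have hodd : ∀ i, c i = 1 ∨ c i = 3 := by
    intro i
    have := hcall i
    revert this
    have h4 : ∀ a : ZMod 4, a = 0 ∨ a = 1 ∨ a = 2 ∨ a = 3 := by decide
    rcases h4 (c i) with h | h | h | h <;>
      rw [h] <;> simp [r4] <;> decide
  have h2 : nCount c 2 = 0 := by
    unfold nCount
    rw [Finset.filter_false_of_mem, Finset.card_empty]
    intro i _
    rcases hodd i with h | h <;> rw [h] <;> decide
  have h13 : nCount c 1 + nCount c 3 = n := by
    unfold nCount
    have := Finset.card_filter_add_card_filter_not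
      (s := (Finset.univ : Finset (Fin n))) (p := fun i => c i = 1)
    rw [Finset.card_univ, Fintype.card_fin] at this
    have e : Finset.univ.filter (fun a => ¬ c a = 1) = Finset.univ.filter (fun i => c i = 3) := by
      apply Finset.filter_congr
      intro i _
      rcases hodd i with h | h <;> · rw [h]; simp <;> decide
    rw [e] at this
    exact this
  have := hII c hc
  unfold wtE at this
  rw [h2] at this
  omega
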